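/- Let p be a prime, let Λ = ℤ_p[[X]] be the ring of formal power series over the p-adic integers, let G be a cyclic group of order p, and let Λ[G] be the group ring. Let M be a finitely generated Λ[G]-module that is free of finite rank n as a Λ-module. Let J ⊆ Λ[G] be the ideal generated by X and by the elements g − 1 for all g ∈ G, and assume the coinvariant module M/JM is a free ℤ_p-module of rank r satisfying r · p = n. Then M is a free Λ[G]-module (of rank r). -/

import Mathlib

open PowerSeries

/-- The ideal `J ⊆ Λ[G]` (with `Λ = ℤ_p[[X]]`) generated by `X` and the elements
`g - 1` for all `g ∈ G`. -/
noncomputable def coinvariantsIdeal (p : ℕ) [Fact p.Prime] (G : Type) [Group G] :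
    Ideal (MonoidAlgebra (PowerSeries ℤ_[p]) G) :=
  Ideal.span
    ({algebraMap (PowerSeries ℤ_[p]) (MonoidAlgebra (PowerSeries ℤ_[p]) G) PowerSeries.X} ∪
      Set.range fun g : G => MonoidAlgebra.of (PowerSeries ℤ_[p]) G g - 1)

set_option maxHeartbeats 1000000

/-- Let `Λ = ℤ_p[[X]]`, let `G` be cyclic of order `p`, and let `M` be a finitely generated
`Λ[G]`-module that is free of finite rank `n` as a `Λ`-module.  If the coinvariant module
`M/JM` (where `J = (X, g - 1 : g ∈ G) ⊆ Λ[G]`) is a free `ℤ_p`-module of rank `r` with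
`r * p = n`, then `M` is a free `Λ[G]`-module (of rank `r`). -/
theorem free_over_group_ring_of_coinvariants_free
    (p n r : ℕ) [Fact p.Prime] (G : Type) [Group G] [IsCyclic G]
    (hG : Nat.card G = p)
    (M : Type) [AddCommGroup M]
    [Module (MonoidAlgebra (PowerSeries ℤ_[p]) G) M]
    [Module (PowerSeries ℤ_[p]) M] [Module ℤ_[p] M]
    [IsScalarTower (PowerSeries ℤ_[p]) (MonoidAlgebra (PowerSeries ℤ_[p]) G) M]
    [IsScalarTower ℤ_[p] (MonoidAlgebra (PowerSeries ℤ_[p]) G) M]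
    (hfg : Module.Finite (MonoidAlgebra (PowerSeries ℤ_[p]) G) M)
    (hfree : Module.Free (PowerSeries ℤ_[p]) M)
    (hn : Module.finrank (PowerSeries ℤ_[p]) M = n)
    (hQfree : Module.Free ℤ_[p]
      (M ⧸ (coinvariantsIdeal p G •
        (⊤ : Submodule (MonoidAlgebra (PowerSeries ℤ_[p]) G) M))))
    (hQrank : Module.finrank ℤ_[p]
      (M ⧸ (coinvariantsIdeal p G •
        (⊤ : Submodule (MonoidAlgebra (PowerSeries ℤ_[p]) G) M))) = r)
    (hrn : r * p = n) :
    Module.Free (MonoidAlgebra (PowerSeries ℤ_[p]) G) M ∧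
      Module.finrank (MonoidAlgebra (PowerSeries ℤ_[p]) G) M = r := by
  classical
  have hp : p.Prime := Fact.out
  have hfinG : Finite G := Nat.finite_of_card_ne_zero (by rw [hG]; exact hp.ne_zero)
  letI : Fintype G := Fintype.ofFinite G
  have hcardG : Fintype.card G = p := by rw [← Nat.card_eq_fintype_card, hG]
  letI : CommGroup G := IsCyclic.commGroup
  letI bA : Module.Basis G (PowerSeries ℤ_[p]) (MonoidAlgebra (PowerSeries ℤ_[p]) G) :=
    MonoidAlgebra.basis G (PowerSeries ℤ_[p])
  haveI hAfin : Module.Finite (PowerSeries ℤ_[p]) (MonoidAlgebra (PowerSeries ℤ_[p]) G) :=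
    Module.Finite.of_basis bA
  haveI hAfree : Module.Free (PowerSeries ℤ_[p]) (MonoidAlgebra (PowerSeries ℤ_[p]) G) :=
    Module.Free.of_basis bA
  haveI hMfinΛ : Module.Finite (PowerSeries ℤ_[p]) M :=
    Module.Finite.trans (MonoidAlgebra (PowerSeries ℤ_[p]) G) M
  -- the case `r = 0`
  rcases Nat.eq_zero_or_pos r with hr0 | hrpos
  · subst hr0
    have hn0 : n = 0 := by omega
    haveI : Subsingleton M := by
      rw [← Module.finrank_zero_iff (R := PowerSeries ℤ_[p])]
      rw [hn, hn0]
    refine ⟨inferInstance, ?_⟩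
    rw [Module.finrank_zero_of_subsingleton]
  -- nonunits of Λ land in every maximal ideal of Λ[G]
  haveI : Algebra.IsIntegral (PowerSeries ℤ_[p]) (MonoidAlgebra (PowerSeries ℤ_[p]) G) :=
    Algebra.IsIntegral.of_finite _ _
  have hmem : ∀ m' : Ideal (MonoidAlgebra (PowerSeries ℤ_[p]) G), m'.IsMaximal →
      ∀ y : PowerSeries ℤ_[p], ¬ IsUnit y →
      algebraMap (PowerSeries ℤ_[p]) (MonoidAlgebra (PowerSeries ℤ_[p]) G) y ∈ m' := by
    intro m' hm' y hy
    haveI := hm'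
    have h1 : (Ideal.comap
        (algebraMap (PowerSeries ℤ_[p]) (MonoidAlgebra (PowerSeries ℤ_[p]) G)) m').IsMaximal :=
      Ideal.isMaximal_comap_of_isIntegral_of_isMaximal m'
    have h2 := IsLocalRing.eq_maximalIdeal h1
    have h3 : y ∈ Ideal.comap
        (algebraMap (PowerSeries ℤ_[p]) (MonoidAlgebra (PowerSeries ℤ_[p]) G)) m' := by
      rw [h2]
      exact hy
    exact h3
  have hXnonunit : ¬ IsUnit (PowerSeries.X : PowerSeries ℤ_[p]) := by
    intro h
    have h2 := PowerSeries.isUnit_constantCoeff _ h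
    rw [PowerSeries.constantCoeff_X] at h2
    exact not_isUnit_zero h2
  have hpnonunit : ¬ IsUnit ((p : PowerSeries ℤ_[p])) := by
    intro h
    have h2 := PowerSeries.isUnit_constantCoeff _ h
    rw [map_natCast, PadicInt.isUnit_iff, PadicInt.norm_p, inv_eq_one] at h2
    have : p = 1 := by simpa using h2
    exact hp.ne_one this
  -- the ideal J is contained in the Jacobson radical
  have hJjac : coinvariantsIdeal p G ≤
      Ideal.jacobson (⊥ : Ideal (MonoidAlgebra (PowerSeries ℤ_[p]) G)) := by
    rw [coinvariantsIdeal, Ideal.span_le]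
    intro x hx
    rw [SetLike.mem_coe, Ideal.jacobson, Ideal.mem_sInf]
    rintro m' ⟨-, hm'⟩
    haveI := hm'
    simp only [Set.mem_union, Set.mem_singleton_iff, Set.mem_range] at hx
    rcases hx with rfl | ⟨g, rfl⟩
    · exact hmem m' hm' _ hXnonunit
    · have hpm : (p : MonoidAlgebra (PowerSeries ℤ_[p]) G) ∈ m' := by
        have h4 := hmem m' hm' (p : PowerSeries ℤ_[p]) hpnonunit
        rwa [map_natCast] at h4
      have hgp : (MonoidAlgebra.of (PowerSeries ℤ_[p]) G g) ^ p = 1 := by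
        rw [← map_pow]
        have : g ^ p = 1 := by rw [← hcardG]; exact pow_card_eq_one
        rw [this, map_one]
      obtain ⟨c, hc⟩ := Commute.exists_add_pow_prime_eq hp
        (Commute.one_right (MonoidAlgebra.of (PowerSeries ℤ_[p]) G g - 1))
      have hxp : (MonoidAlgebra.of (PowerSeries ℤ_[p]) G g - 1) ^ p =
            -(p * ((MonoidAlgebra.of (PowerSeries ℤ_[p]) G g - 1) * c)) := by
        have e : (MonoidAlgebra.of (PowerSeries ℤ_[p]) G g - 1) + 1 =
            MonoidAlgebra.of (PowerSeries ℤ_[p]) G g := by ring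
        rw [e, hgp, one_pow] at hc
        linear_combination -hc
      have hmem2 : (MonoidAlgebra.of (PowerSeries ℤ_[p]) G g - 1) ^ p ∈ m' := by
        rw [hxp]
        exact neg_mem (Ideal.mul_mem_right _ m' hpm)
      exact hm'.isPrime.mem_of_pow_mem p hmem2
  -- a basis of the coinvariants
  obtain ⟨ι, b⟩ := hQfree.exists_basis
  have hrank : Module.rank ℤ_[p]
      (M ⧸ (coinvariantsIdeal p G •
        (⊤ : Submodule (MonoidAlgebra (PowerSeries ℤ_[p]) G) M))) = Cardinal.mk ι :=
    (b.mk_eq_rank'').symm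
  have hfinι : Cardinal.mk ι < Cardinal.aleph0 := by
    by_contra hinf
    push_neg at hinf
    rw [Module.finrank, hrank, Cardinal.toNat_apply_of_aleph0_le hinf] at hQrank
    omega
  haveI : Fintype ι := (Cardinal.lt_aleph0_iff_fintype.1 hfinι).some
  have hcardι : Fintype.card ι = r := by
    rw [Module.finrank, hrank, Cardinal.mk_toNat_eq_card] at hQrank
    exact hQrank
  -- lift the basis vectors to M
  have hlift : ∀ i : ι, ∃ x : M,
      Submodule.mkQ (coinvariantsIdeal p G •
        (⊤ : Submodule (MonoidAlgebra (PowerSeries ℤ_[p]) G) M)) x = b i :=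
    fun i => Submodule.mkQ_surjective _ (b i)
  choose v hv using hlift
  -- the lifts generate M, by Nakayama
  have hsup : (⊤ : Submodule (MonoidAlgebra (PowerSeries ℤ_[p]) G) M) ≤
      Submodule.span (MonoidAlgebra (PowerSeries ℤ_[p]) G) (Set.range v) ⊔
        coinvariantsIdeal p G • (⊤ : Submodule (MonoidAlgebra (PowerSeries ℤ_[p]) G) M) := by
    intro x _
    set π := Submodule.mkQ (coinvariantsIdeal p G •
        (⊤ : Submodule (MonoidAlgebra (PowerSeries ℤ_[p]) G) M)) with hπ
    have h1 : π x ∈ Submodule.span ℤ_[p] (Set.range b) := by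
      rw [b.span_eq]; trivial
    have h2 : π x ∈ Submodule.span (MonoidAlgebra (PowerSeries ℤ_[p]) G) (Set.range b) :=
      Submodule.span_le_restrictScalars ℤ_[p] (MonoidAlgebra (PowerSeries ℤ_[p]) G)
        (Set.range b) h1
    have h3 : Set.range b = π '' Set.range v := by
      rw [← Set.range_comp]
      exact congrArg Set.range (funext fun i => (hv i).symm)
    rw [h3, ← Submodule.map_span] at h2
    obtain ⟨y, hy, hyx⟩ := Submodule.mem_map.1 h2
    have h4 : x - y ∈ coinvariantsIdeal p G •
        (⊤ : Submodule (MonoidAlgebra (PowerSeries ℤ_[p]) G) M) := by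
      rw [← Submodule.ker_mkQ (coinvariantsIdeal p G •
        (⊤ : Submodule (MonoidAlgebra (PowerSeries ℤ_[p]) G) M)), LinearMap.mem_ker, map_sub,
        ← hπ, hyx, sub_self]
    exact Submodule.mem_sup.2 ⟨y, hy, x - y, h4, by abel⟩
  have hspan : Submodule.span (MonoidAlgebra (PowerSeries ℤ_[p]) G) (Set.range v) = ⊤ :=
    top_unique (Submodule.le_of_le_smul_of_le_jacobson_bot hfg.fg_top hJjac hsup)
  -- the induced map is surjective
  let f : (ι → MonoidAlgebra (PowerSeries ℤ_[p]) G) →ₗ[MonoidAlgebra (PowerSeries ℤ_[p]) G] M :=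
    Fintype.linearCombination (MonoidAlgebra (PowerSeries ℤ_[p]) G) v
  have hfsurj : Function.Surjective f := by
    rw [← LinearMap.range_eq_top, Fintype.range_linearCombination]
    exact hspan
  -- count ranks over Λ
  have hfrA : Module.finrank (PowerSeries ℤ_[p]) (MonoidAlgebra (PowerSeries ℤ_[p]) G) = p := by
    rw [Module.finrank_eq_card_basis bA, hcardG]
  have hfrP : Module.finrank (PowerSeries ℤ_[p])
      (ι → MonoidAlgebra (PowerSeries ℤ_[p]) G) = n := by
    rw [Module.finrank_pi_fintype, hfrA]
    simp [hcardι, ← hrn, Finset.sum_const, mul_comm]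
  -- an auxiliary Λ-linear equivalence
  letI bM := Module.Free.chooseBasis (PowerSeries ℤ_[p]) M
  letI bP := Module.Free.chooseBasis (PowerSeries ℤ_[p]) (ι → MonoidAlgebra (PowerSeries ℤ_[p]) G)
  have hcards : Fintype.card
        (Module.Free.ChooseBasisIndex (PowerSeries ℤ_[p]) (ι → MonoidAlgebra (PowerSeries ℤ_[p]) G))
      = Fintype.card (Module.Free.ChooseBasisIndex (PowerSeries ℤ_[p]) M) := by
    rw [← Module.finrank_eq_card_chooseBasisIndex, ← Module.finrank_eq_card_chooseBasisIndex,
      hfrP, hn]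
  let e : (ι → MonoidAlgebra (PowerSeries ℤ_[p]) G) ≃ₗ[PowerSeries ℤ_[p]] M :=
    bP.equiv bM (Fintype.equivOfCardEq hcards)
  -- injectivity via the Orzech property
  have hendo : Function.Surjective
      ((f.restrictScalars (PowerSeries ℤ_[p])).comp e.symm.toLinearMap) :=
    hfsurj.comp e.symm.surjective
  have hinj : Function.Injective f := by
    have h5 := OrzechProperty.injective_of_surjective_endomorphism
      ((f.restrictScalars (PowerSeries ℤ_[p])).comp e.symm.toLinearMap) hendo
    intro a b hab
    have : ((f.restrictScalars (PowerSeries ℤ_[p])).comp e.symm.toLinearMap) (e a) =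
        ((f.restrictScalars (PowerSeries ℤ_[p])).comp e.symm.toLinearMap) (e b) := by
      simp [hab]
    exact e.injective (h5 this)
  -- conclude
  let iso : (ι → MonoidAlgebra (PowerSeries ℤ_[p]) G) ≃ₗ[MonoidAlgebra (PowerSeries ℤ_[p]) G] M :=
    LinearEquiv.ofBijective f ⟨hinj, hfsurj⟩
  haveI : Module.Free (MonoidAlgebra (PowerSeries ℤ_[p]) G) M := Module.Free.of_equiv iso
  refine ⟨inferInstance, ?_⟩
  rw [← iso.finrank_eq, Module.finrank_pi, hcardι]
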